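/- Every finite simple graph G is the mincut graph of some graph: there exists a connected simple graph H with G ≅ X(H). Moreover H can be chosen so that G is a subgraph of H. -/

import Mathlib

open SimpleGraph

variable {V : Type*}

/-- `X` is an edge-cut of `G`: a set of edges of `G` whose deletion disconnects `G`. -/
def IsEdgeCut (G : SimpleGraph V) (X : Set (Sym2 V)) : Prop :=
  X ⊆ G.edgeSet ∧ ¬ (G.deleteEdges X).Connected

/-- `X` is a minimum edge-cut (mincut) of `G`. -/
def IsMinCut (G : SimpleGraph V) (X : Set (Sym2 V)) : Prop :=
  IsEdgeCut G X ∧ ∀ Y : Set (Sym2 V), IsEdgeCut G Y → X.ncard ≤ Y.ncard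

/-- The edge connectivity of `G`: minimum cardinality of an edge-cut. -/
noncomputable def edgeConn (G : SimpleGraph V) : ℕ :=
  sInf {n | ∃ X : Set (Sym2 V), IsEdgeCut G X ∧ X.ncard = n}

/-- The mincut graph `X(G)`: intersection graph of the minimum edge-cuts of `G`. -/
def mincutGraph (G : SimpleGraph V) : SimpleGraph {X : Set (Sym2 V) // IsMinCut G X} :=
  SimpleGraph.fromRel (fun A B => (A.1 ∩ B.1).Nonempty)

namespace MincutAux

/-- crossing edges of a vertex set -/
def cx {α : Type*} (H : SimpleGraph α) (S : Set α) : Set (Sym2 α) :=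
  {e | ∃ x y, x ∈ S ∧ y ∉ S ∧ H.Adj x y ∧ e = s(x, y)}

lemma cx_compl {α : Type*} (H : SimpleGraph α) (S : Set α) : cx H Sᶜ = cx H S := by
  ext e
  constructor
  · rintro ⟨x, y, hx, hy, ha, rfl⟩
    exact ⟨y, x, by simpa using hy, by simpa using hx, ha.symm, Sym2.eq_swap⟩
  · rintro ⟨x, y, hx, hy, ha, rfl⟩
    exact ⟨y, x, by simpa using hy, by simpa using hx, ha.symm, Sym2.eq_swap⟩

lemma cx_singleton {α : Type*} (H : SimpleGraph α) (a : α) :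
    cx H {a} = {e | e ∈ H.edgeSet ∧ a ∈ e} := by
  ext e
  constructor
  · rintro ⟨x, y, hx, hy, ha, rfl⟩
    rcases hx with rfl
    exact ⟨ha, Sym2.mem_mk_left _ _⟩
  · rintro ⟨he, hae⟩
    induction e with
    | _ x y =>
      have hadj : H.Adj x y := he
      rcases Sym2.mem_iff.1 hae with rfl | rfl
      · exact ⟨a, y, rfl, fun h => hadj.ne (Set.eq_of_mem_singleton h).symm, hadj, rfl⟩
      · exact ⟨a, x, rfl, fun h => hadj.ne' (Set.eq_of_mem_singleton h).symm, hadj.symm,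
          Sym2.eq_swap⟩

/-- every edge cut contains a crossing set -/
lemma cut_contains_cx {α : Type*} [Nonempty α] {H : SimpleGraph α} {X : Set (Sym2 α)}
    (hX : IsEdgeCut H X) :
    ∃ S : Set α, S.Nonempty ∧ Sᶜ.Nonempty ∧ cx H S ⊆ X := by
  have hnc := hX.2
  rw [SimpleGraph.connected_iff] at hnc
  push_neg at hnc
  have hpre : ¬ (H.deleteEdges X).Preconnected := fun h => @not_isEmpty_of_nonempty α _ (hnc h)
  unfold SimpleGraph.Preconnected at hpre
  push_neg at hpre
  obtain ⟨a, b, hab⟩ := hpre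
  refine ⟨{x | (H.deleteEdges X).Reachable a x}, ⟨a, SimpleGraph.Reachable.refl a⟩,
    ⟨b, hab⟩, ?_⟩
  rintro e ⟨x, y, hx, hy, ha, rfl⟩
  by_contra heX
  exact hy (hx.trans (SimpleGraph.Adj.reachable (by
    rw [SimpleGraph.deleteEdges_adj]; exact ⟨ha, heX⟩)))

section Construction

variable {V : Type*} [Fintype V] (G : SimpleGraph V)

noncomputable def dd (v : V) : ℕ := {w | G.Adj v w}.ncard
noncomputable def DD : ℕ := Finset.univ.sup (dd G)
noncomputable def kk : ℕ := 2 * DD G + 1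
noncomputable def cc (v : V) : ℕ := kk G - dd G v
noncomputable def mc : ℕ := kk G + 2

variable {G}

lemma dd_le (v : V) : dd G v ≤ DD G := Finset.le_sup (Finset.mem_univ v)

lemma cc_ge (v : V) : DD G + 1 ≤ cc G v := by
  have := dd_le (G := G) v; unfold cc kk; omega

lemma cc_lt_mc (v : V) : cc G v < mc G := by
  unfold cc mc; omega

lemma dd_add_cc (v : V) : dd G v + cc G v = kk G := by
  have := dd_le (G := G) v; unfold cc kk at *; omega

variable (G)

def HH : SimpleGraph (V ⊕ Fin (mc G)) where
  Adj x y := match x, y with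
    | .inl v, .inl w => G.Adj v w
    | .inl v, .inr i => (i : ℕ) < cc G v
    | .inr i, .inl v => (i : ℕ) < cc G v
    | .inr i, .inr j => i ≠ j
  symm := by
    constructor
    rintro (v|i) (w|j) h
    · exact h.symm
    · exact h
    · exact h
    · exact fun hji => h hji.symm
  loopless := by constructor; rintro (v|i) h <;> simp_all

variable {G}

@[simp] lemma HH_adj_inl_inl {v w : V} : (HH G).Adj (.inl v) (.inl w) ↔ G.Adj v w := Iff.rfl
@[simp] lemma HH_adj_inl_inr {v : V} {i : Fin (mc G)} :
    (HH G).Adj (.inl v) (.inr i) ↔ (i : ℕ) < cc G v := Iff.rfl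
@[simp] lemma HH_adj_inr_inl {v : V} {i : Fin (mc G)} :
    (HH G).Adj (.inr i) (.inl v) ↔ (i : ℕ) < cc G v := Iff.rfl
@[simp] lemma HH_adj_inr_inr {i j : Fin (mc G)} : (HH G).Adj (.inr i) (.inr j) ↔ i ≠ j := Iff.rfl

variable (G)

/-- the star of a `G`-vertex in `HH G` -/
def star (v : V) : Set (Sym2 (V ⊕ Fin (mc G))) :=
  {e | e ∈ (HH G).edgeSet ∧ Sum.inl v ∈ e}

variable {G}

lemma cx_singleton_star (v : V) : cx (HH G) {Sum.inl v} = star G v := cx_singleton _ _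

lemma star_eq (v : V) :
    star G v = ((fun w => s(Sum.inl v, Sum.inl w)) '' {w | G.Adj v w}) ∪
      ((fun i : Fin (mc G) => s(Sum.inl v, Sum.inr i)) '' {i : Fin (mc G) | (i : ℕ) < cc G v}) := by
  ext e
  constructor
  · rintro ⟨he, hv⟩
    induction e with
    | _ x y =>
      have hadj : (HH G).Adj x y := he
      rcases Sym2.mem_iff.1 hv with rfl | rfl
      · match y, hadj with
        | .inl w, hadj => exact Or.inl ⟨w, hadj, rfl⟩
        | .inr i, hadj => exact Or.inr ⟨i, hadj, rfl⟩
      · match x, hadj with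
        | .inl w, hadj => exact Or.inl ⟨w, hadj.symm, Sym2.eq_swap⟩
        | .inr i, hadj => exact Or.inr ⟨i, hadj.symm, Sym2.eq_swap⟩
  · rintro (⟨w, hw, rfl⟩ | ⟨i, hi, rfl⟩)
    · exact ⟨hw, Sym2.mem_mk_left _ _⟩
    · exact ⟨hi, Sym2.mem_mk_left _ _⟩

lemma star_ncard (v : V) : (star G v).ncard = kk G := by
  rw [star_eq]
  have hinj1 : Function.Injective (fun w => s(Sum.inl v, Sum.inl w) : V → Sym2 (V ⊕ Fin (mc G))) := by
    intro a b hab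
    simp only [Sym2.eq_iff, Sum.inl.injEq] at hab
    rcases hab with ⟨-, h⟩ | ⟨h1, h2⟩
    · exact h
    · exact h2.trans h1

  have hinj2 : Function.Injective
      (fun i : Fin (mc G) => s(Sum.inl v, Sum.inr i) : Fin (mc G) → Sym2 (V ⊕ Fin (mc G))) := by
    intro a b hab
    simp only [Sym2.eq_iff] at hab
    rcases hab with ⟨-, h⟩ | ⟨h, -⟩
    · exact Sum.inr.inj h
    · exact absurd h (by simp)
  have hdisj : Disjoint ((fun w => s(Sum.inl v, Sum.inl w)) '' {w | G.Adj v w})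
      ((fun i : Fin (mc G) => s(Sum.inl v, Sum.inr i)) '' {i : Fin (mc G) | (i : ℕ) < cc G v}) := by
    rw [Set.disjoint_left]
    rintro e ⟨w, -, rfl⟩ ⟨i, -, he⟩
    simp [Sym2.eq_iff] at he
  rw [Set.ncard_union_eq hdisj (Set.toFinite _) (Set.toFinite _),
    Set.ncard_image_of_injective _ hinj1, Set.ncard_image_of_injective _ hinj2]
  have h2 : ({i : Fin (mc G) | (i : ℕ) < cc G v}).ncard = cc G v := by
    have : {i : Fin (mc G) | (i : ℕ) < cc G v} =
        (fun j : Fin (cc G v) => (⟨(j : ℕ), lt_trans j.2 (cc_lt_mc v)⟩ : Fin (mc G))) ''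
          Set.univ := by
      ext i
      constructor
      · intro hi
        exact ⟨⟨(i : ℕ), hi⟩, trivial, rfl⟩
      · rintro ⟨j, -, rfl⟩
        exact j.2
    have hinj3 : Function.Injective
        (fun j : Fin (cc G v) => (⟨(j : ℕ), lt_trans j.2 (cc_lt_mc v)⟩ : Fin (mc G))) := by
      intro a b hab
      simp only [Fin.mk.injEq] at hab
      exact Fin.ext hab
    rw [this, Set.ncard_image_of_injective _ hinj3, Set.ncard_univ,
      Nat.card_eq_fintype_card, Fintype.card_fin]
  rw [h2]
  exact dd_add_cc v

lemma i0_lt : 0 < mc G := by unfold mc; omega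

lemma HH_connected : (HH G).Connected := by
  rw [SimpleGraph.connected_iff]
  refine ⟨?_, ⟨Sum.inr ⟨0, i0_lt (G := G)⟩⟩⟩
  have key : ∀ x : V ⊕ Fin (mc G),
      (HH G).Reachable x (Sum.inr ⟨0, i0_lt (G := G)⟩) := by
    rintro (v | i)
    · refine SimpleGraph.Adj.reachable ?_
      show ((⟨0, i0_lt (G := G)⟩ : Fin (mc G)) : ℕ) < cc G v
      have := cc_ge (G := G) v
      simp only
      omega
    · by_cases h : i = ⟨0, i0_lt (G := G)⟩
      · subst h; exact SimpleGraph.Reachable.refl _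
      · exact SimpleGraph.Adj.reachable h
  intro x y
  exact (key x).trans (key y).symm

lemma star_isEdgeCut (v : V) : IsEdgeCut (HH G) (star G v) := by
  constructor
  · exact fun e he => he.1
  · intro hcon
    have hr := hcon.preconnected (Sum.inl v) (Sum.inr ⟨0, i0_lt (G := G)⟩)
    obtain ⟨p⟩ := hr
    cases p with
    | cons h q =>
      rw [SimpleGraph.deleteEdges_adj] at h
      exact h.2 ⟨h.1, Sym2.mem_mk_left _ _⟩

/-- if one side with no `inr` vertices has ≥ 2 elements, many crossing edges; else a singleton -/
lemma key_aux {S : Set (V ⊕ Fin (mc G))} (h1 : S.Nonempty)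
    (hS : ∀ i : Fin (mc G), Sum.inr i ∉ S) :
    (∃ v : V, S = {Sum.inl v}) ∨ kk G + 1 ≤ (cx (HH G) S).ncard := by
  obtain ⟨a, ha⟩ := h1
  obtain ⟨v, rfl⟩ : ∃ v, a = Sum.inl v := by
    match a with
    | .inl v => exact ⟨v, rfl⟩
    | .inr i => exact absurd ha (hS i)
  by_cases hsing : ∀ b ∈ S, b = Sum.inl v
  · left
    exact ⟨v, Set.eq_singleton_iff_unique_mem.2 ⟨ha, hsing⟩⟩
  · right
    push_neg at hsing
    obtain ⟨b, hb, hbv⟩ := hsing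
    obtain ⟨w, rfl⟩ : ∃ w, b = Sum.inl w := by
      match b with
      | .inl w => exact ⟨w, rfl⟩
      | .inr i => exact absurd hb (hS i)
    have hvw : v ≠ w := fun h => hbv (by rw [h])
    have hDm : DD G + 1 ≤ mc G := by unfold mc kk; omega
    set f : Fin (DD G + 1) ⊕ Fin (DD G + 1) → Sym2 (V ⊕ Fin (mc G)) := fun z =>
      match z with
      | .inl i => s(Sum.inl v, Sum.inr (⟨(i : ℕ), lt_of_lt_of_le i.2 hDm⟩ : Fin (mc G)))
      | .inr i => s(Sum.inl w, Sum.inr (⟨(i : ℕ), lt_of_lt_of_le i.2 hDm⟩ : Fin (mc G)))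
      with hf
    have hrange : Set.range f ⊆ cx (HH G) S := by
      rintro e ⟨z, rfl⟩
      match z with
      | .inl i =>
          exact ⟨Sum.inl v, Sum.inr _, ha, hS _, by
            show ((⟨(i : ℕ), _⟩ : Fin (mc G)) : ℕ) < cc G v
            exact lt_of_lt_of_le i.2 (cc_ge v), rfl⟩
      | .inr i =>
          exact ⟨Sum.inl w, Sum.inr _, hb, hS _, by
            show ((⟨(i : ℕ), _⟩ : Fin (mc G)) : ℕ) < cc G w
            exact lt_of_lt_of_le i.2 (cc_ge w), rfl⟩
    have hinj : Function.Injective f := by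
      rintro (i | i) (j | j) hij <;>
        simp only [hf, Sym2.eq_iff, Sum.inl.injEq, Sum.inr.injEq, Fin.mk.injEq] at hij
      · rcases hij with ⟨-, h⟩ | ⟨h, -⟩
        · exact congrArg Sum.inl (Fin.ext h)
        · exact absurd h (by simp)
      · rcases hij with ⟨h, -⟩ | ⟨h, -⟩
        · exact absurd h hvw
        · exact absurd h (by simp)
      · rcases hij with ⟨h, -⟩ | ⟨h, -⟩
        · exact absurd h (Ne.symm hvw)
        · exact absurd h (by simp)
      · rcases hij with ⟨-, h⟩ | ⟨h, -⟩
        · exact congrArg Sum.inr (Fin.ext h)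
        · exact absurd h (by simp)
    have hcard : (Set.range f).ncard = kk G + 1 := by
      rw [← Nat.card_coe_set_eq, Nat.card_range_of_injective hinj,
        Nat.card_eq_fintype_card, Fintype.card_sum, Fintype.card_fin]
      unfold kk; omega
    calc kk G + 1 = (Set.range f).ncard := hcard.symm
      _ ≤ (cx (HH G) S).ncard := Set.ncard_le_ncard hrange (Set.toFinite _)

lemma key_bound {S : Set (V ⊕ Fin (mc G))} (h1 : S.Nonempty) (h2 : Sᶜ.Nonempty) :
    (∃ v : V, cx (HH G) S = star G v) ∨ kk G + 1 ≤ (cx (HH G) S).ncard := by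
  classical
  by_cases hA : ∀ i : Fin (mc G), Sum.inr i ∉ S
  · rcases key_aux h1 hA with ⟨v, rfl⟩ | h
    · exact Or.inl ⟨v, cx_singleton_star v⟩
    · exact Or.inr h
  push_neg at hA
  obtain ⟨i, hi⟩ := hA
  by_cases hB : ∀ j : Fin (mc G), Sum.inr j ∈ S
  · have hA' : ∀ j : Fin (mc G), Sum.inr j ∉ Sᶜ := fun j h => h (hB j)
    rcases key_aux h2 hA' with ⟨v, hv⟩ | h
    · refine Or.inl ⟨v, ?_⟩
      rw [← cx_compl, hv, cx_singleton_star]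
    · rw [← cx_compl (H := HH G) (S := S)]
      exact Or.inr h
  push_neg at hB
  obtain ⟨j, hj⟩ := hB
  right
  have hij : i ≠ j := fun h => hj (h ▸ hi)
  set g : {l : Fin (mc G) // l ≠ i} → Sym2 (V ⊕ Fin (mc G)) := fun l =>
    if Sum.inr l.1 ∈ S then s(Sum.inr l.1, Sum.inr j) else s(Sum.inr i, Sum.inr l.1) with hg
  have hrange : Set.range g ⊆ cx (HH G) S := by
    rintro e ⟨l, rfl⟩
    by_cases hl : Sum.inr l.1 ∈ S
    · rw [hg]
      simp only [if_pos hl]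
      exact ⟨Sum.inr l.1, Sum.inr j, hl, hj, fun h => hj (h ▸ hl), rfl⟩
    · rw [hg]
      simp only [if_neg hl]
      exact ⟨Sum.inr i, Sum.inr l.1, hi, hl, fun h => hl (h ▸ hi), rfl⟩
  have hinj : Function.Injective g := by
    intro l l' heq
    rw [hg] at heq
    by_cases hl : Sum.inr l.1 ∈ S <;> by_cases hl' : Sum.inr l'.1 ∈ S <;>
      simp only [if_pos, if_neg, hl, hl', if_true, if_false] at heq <;>
      simp only [Sym2.eq_iff, Sum.inr.injEq] at heq
    · rcases heq with ⟨h, -⟩ | ⟨h, h'⟩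
      · exact Subtype.ext h
      · exact absurd (h ▸ hl) hj
    · rcases heq with ⟨h, -⟩ | ⟨-, h⟩
      · exact absurd h l.2
      · exact absurd h.symm hij
    · rcases heq with ⟨h, -⟩ | ⟨h, -⟩
      · exact absurd h.symm l'.2
      · exact absurd h hij
    · rcases heq with ⟨-, h⟩ | ⟨-, h⟩
      · exact Subtype.ext h
      · exact absurd h l.2
  have hcard : (Set.range g).ncard = kk G + 1 := by
    rw [← Nat.card_coe_set_eq, Nat.card_range_of_injective hinj,
      Nat.card_eq_fintype_card]
    have h1' : Fintype.card {x : Fin (mc G) // x = i} = 1 := Fintype.card_subtype_eq i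
    have h2' := Fintype.card_subtype_compl (fun x : Fin (mc G) => x = i)
    have h3 : Fintype.card {x : Fin (mc G) // ¬ x = i} = mc G - 1 := by
      rw [h2', h1', Fintype.card_fin]
    have : mc G - 1 = kk G + 1 := by unfold mc; omega
    rw [← this, ← h3]
  calc kk G + 1 = (Set.range g).ncard := hcard.symm
    _ ≤ (cx (HH G) S).ncard := Set.ncard_le_ncard hrange (Set.toFinite _)

lemma cx_ge {S : Set (V ⊕ Fin (mc G))} (h1 : S.Nonempty) (h2 : Sᶜ.Nonempty) :
    kk G ≤ (cx (HH G) S).ncard := by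
  rcases key_bound h1 h2 with ⟨v, hv⟩ | h
  · rw [hv, star_ncard]
  · omega

lemma star_isMinCut (v : V) : IsMinCut (HH G) (star G v) := by
  refine ⟨star_isEdgeCut v, fun Y hY => ?_⟩
  haveI : Nonempty (V ⊕ Fin (mc G)) := ⟨Sum.inr ⟨0, i0_lt (G := G)⟩⟩
  obtain ⟨S, h1, h2, hsub⟩ := cut_contains_cx hY
  calc (star G v).ncard = kk G := star_ncard v
    _ ≤ (cx (HH G) S).ncard := cx_ge h1 h2
    _ ≤ Y.ncard := Set.ncard_le_ncard hsub (Set.toFinite _)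

lemma mincut_eq_star [Nonempty V] {X : Set (Sym2 (V ⊕ Fin (mc G)))}
    (hX : IsMinCut (HH G) X) : ∃ v : V, X = star G v := by
  obtain ⟨v₀⟩ : Nonempty V := inferInstance
  have hXk : X.ncard ≤ kk G := by
    have := hX.2 (star G v₀) (star_isEdgeCut v₀)
    rwa [star_ncard] at this
  haveI : Nonempty (V ⊕ Fin (mc G)) := ⟨Sum.inr ⟨0, i0_lt (G := G)⟩⟩
  obtain ⟨S, h1, h2, hsub⟩ := cut_contains_cx hX.1
  have hle : (cx (HH G) S).ncard ≤ X.ncard := Set.ncard_le_ncard hsub (Set.toFinite _)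
  rcases key_bound h1 h2 with ⟨v, hv⟩ | hge
  · refine ⟨v, ?_⟩
    have hsub' : star G v ⊆ X := hv ▸ hsub
    have hcard : X.ncard ≤ (star G v).ncard := by rw [star_ncard]; exact hXk
    exact (Set.eq_of_subset_of_ncard_le hsub' hcard (Set.toFinite _)).symm
  · omega

lemma star_inj : Function.Injective (star G) := by
  intro v w hvw
  have h0 : ((⟨0, i0_lt (G := G)⟩ : Fin (mc G)) : ℕ) < cc G v := by
    have := cc_ge (G := G) v; simp only; omega
  have hmem : s(Sum.inl v, Sum.inr (⟨0, i0_lt (G := G)⟩ : Fin (mc G))) ∈ star G v :=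
    ⟨h0, Sym2.mem_mk_left _ _⟩
  rw [hvw] at hmem
  rcases Sym2.mem_iff.1 hmem.2 with h | h
  · exact (Sum.inl.inj h.symm)
  · exact absurd h (by simp)

end Construction

end MincutAux


theorem every_graph_is_mincutGraph {V : Type*} [Fintype V] (G : SimpleGraph V) :
    ∃ (m : ℕ) (H : SimpleGraph (V ⊕ Fin m)), H.Connected ∧
      (∀ v w : V, G.Adj v w → H.Adj (Sum.inl v) (Sum.inl w)) ∧
      Nonempty (G ≃g mincutGraph H) := by
  classical
  open MincutAux in
  cases isEmpty_or_nonempty V with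
  | inl hemp =>
    haveI := hemp
    have hall : ∀ x : V ⊕ Fin 1, x = Sum.inr 0 := by
      rintro (v | i)
      · exact isEmptyElim v
      · exact congrArg Sum.inr (Subsingleton.elim i 0)
    refine ⟨1, ⊥, ?_, fun v => isEmptyElim v, ?_⟩
    · rw [SimpleGraph.connected_iff]
      refine ⟨fun x y => ?_, ⟨Sum.inr 0⟩⟩
      rw [hall x, hall y]
    · have hcon : ∀ X : Set (Sym2 (V ⊕ Fin 1)),
          ((⊥ : SimpleGraph (V ⊕ Fin 1)).deleteEdges X).Connected := by
        intro X
        rw [SimpleGraph.connected_iff]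
        refine ⟨fun x y => ?_, ⟨Sum.inr 0⟩⟩
        rw [hall x, hall y]
      haveI : IsEmpty {X : Set (Sym2 (V ⊕ Fin 1)) // IsMinCut (⊥ : SimpleGraph (V ⊕ Fin 1)) X} :=
        ⟨fun X => X.2.1.2 (hcon X.1)⟩
      exact ⟨⟨Equiv.equivOfIsEmpty V _, fun {a b} => isEmptyElim a⟩⟩
  | inr hne =>
    refine ⟨mc G, HH G, HH_connected, fun v w h => h, ?_⟩
    have hbij : Function.Bijective
        (fun v : V => (⟨star G v, star_isMinCut v⟩ :
          {X : Set (Sym2 (V ⊕ Fin (mc G))) // IsMinCut (HH G) X})) := by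
      constructor
      · intro a b hab
        exact star_inj (congrArg Subtype.val hab)
      · rintro ⟨X, hX⟩
        obtain ⟨v, rfl⟩ := mincut_eq_star hX
        exact ⟨v, rfl⟩
    refine ⟨⟨Equiv.ofBijective _ hbij, ?_⟩⟩
    intro a b
    show (mincutGraph (HH G)).Adj ⟨star G a, _⟩ ⟨star G b, _⟩ ↔ G.Adj a b
    rw [mincutGraph, SimpleGraph.fromRel_adj]
    constructor
    · rintro ⟨hne', hcap⟩
      have hcap' : (star G a ∩ star G b).Nonempty := by
        rcases hcap with h | h
        · exact h
        · rwa [Set.inter_comm]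
      obtain ⟨e, he1, he2⟩ := hcap'
      have hab : a ≠ b := by
        rintro rfl
        exact hne' rfl
      have hmem : Sum.inl a ∈ e ∧ Sum.inl b ∈ e := ⟨he1.2, he2.2⟩
      have he : e = s(Sum.inl a, Sum.inl b) :=
        (Sym2.mem_and_mem_iff (by simpa using hab)).1 hmem
      have : (HH G).Adj (Sum.inl a) (Sum.inl b) := by
        rw [← SimpleGraph.mem_edgeSet, ← he]
        exact he1.1
      exact this
    · intro h
      refine ⟨?_, Or.inl ⟨s(Sum.inl a, Sum.inl b), ⟨h, Sym2.mem_mk_left _ _⟩,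
        ⟨h, Sym2.mem_mk_right _ _⟩⟩⟩
      intro hc
      exact h.ne (star_inj (congrArg Subtype.val hc))
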